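/- Let a, b, c ∈ ℤ² with a ≠ 0 and with b and c linearly independent. Let α ∈ ℝ² satisfy ⟨b, α⟩ ∈ ℤ and ⟨c, α⟩ ∈ ℤ. Then for every λ ∈ ℤ the Euclidean distance from α to the line {x ∈ ℝ² : ⟨a, x⟩ = λ} is an integer multiple of 1/(|a|·|det(b, c)|). -/

import Mathlib

/-- The integer vector `m ∈ ℤ²` viewed as a point of the Euclidean plane. -/
noncomputable def vec (m : Fin 2 → ℤ) : EuclideanSpace ℝ (Fin 2) :=
  (WithLp.equiv 2 (Fin 2 → ℝ)).symm (fun i => (m i : ℝ))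

/-- The determinant of the 2×2 matrix formed by `b, c ∈ ℤ²`. -/
def det2 (b c : Fin 2 → ℤ) : ℤ := b 0 * c 1 - b 1 * c 0

/-- Distance from a point to a hyperplane `{x | ⟪v, x⟫ = r}`. -/
lemma infDist_hyperplane {E : Type*} [NormedAddCommGroup E] [InnerProductSpace ℝ E]
    (v : E) (hv : v ≠ 0) (α : E) (r : ℝ) :
    Metric.infDist α {x : E | (inner ℝ v x : ℝ) = r} = |(inner ℝ v α : ℝ) - r| / ‖v‖ := by
  have hvn : (0:ℝ) < ‖v‖ := norm_pos_iff.mpr hv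
  set d : ℝ := ((inner ℝ v α : ℝ) - r) / ‖v‖ ^ 2 with hd
  have hx0 : (α - d • v) ∈ {x : E | (inner ℝ v x : ℝ) = r} := by
    simp only [Set.mem_setOf_eq, inner_sub_right, inner_smul_right, real_inner_self_eq_norm_sq]
    rw [hd, div_mul_cancel₀ _ (pow_ne_zero 2 hvn.ne')]; ring
  have hne : ({x : E | (inner ℝ v x : ℝ) = r}).Nonempty := ⟨_, hx0⟩
  have hlow : ∀ y ∈ {x : E | (inner ℝ v x : ℝ) = r},
      |(inner ℝ v α : ℝ) - r| / ‖v‖ ≤ dist α y := by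
    intro y hy
    have h1 : |(inner ℝ v (α - y) : ℝ)| ≤ ‖v‖ * ‖α - y‖ := abs_real_inner_le_norm v (α - y)
    have h2 : (inner ℝ v (α - y) : ℝ) = (inner ℝ v α : ℝ) - r := by
      rw [inner_sub_right, hy]
    rw [h2] at h1
    rw [dist_eq_norm, div_le_iff₀ hvn]
    linarith [h1]
  apply le_antisymm
  · calc Metric.infDist α {x : E | (inner ℝ v x : ℝ) = r} ≤ dist α (α - d • v) :=
          Metric.infDist_le_dist_of_mem hx0
      _ = |(inner ℝ v α : ℝ) - r| / ‖v‖ := by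
          rw [dist_eq_norm, sub_sub_cancel, norm_smul, Real.norm_eq_abs, hd, abs_div, abs_pow,
            abs_norm]
          field_simp
  · by_contra hlt
    push_neg at hlt
    obtain ⟨y, hy, hdy⟩ := (Metric.infDist_lt_iff hne).mp hlt
    exact absurd (hlow y hy) (not_le.mpr hdy)

theorem distance_divisibility
    (a b c : Fin 2 → ℤ) (ha : a ≠ 0) (hbc : det2 b c ≠ 0)
    (α : EuclideanSpace ℝ (Fin 2))
    (hb : ∃ n : ℤ, (inner ℝ (vec b) α : ℝ) = n)
    (hc : ∃ n : ℤ, (inner ℝ (vec c) α : ℝ) = n) :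
    ∀ lam : ℤ, ∃ k : ℤ,
      Metric.infDist α {x : EuclideanSpace ℝ (Fin 2) | (inner ℝ (vec a) x : ℝ) = lam} =
        k * (‖vec a‖ * |(det2 b c : ℝ)|)⁻¹ := by
  intro lam
  obtain ⟨nb, hnb⟩ := hb
  obtain ⟨nc, hnc⟩ := hc
  have hva : vec a ≠ 0 := by
    intro h
    apply ha
    funext i
    have h2 : (a i : ℝ) = 0 := by
      have := congrFun (congrArg (WithLp.equiv 2 (Fin 2 → ℝ)) h) i
      simpa [vec] using this
    exact_mod_cast h2
  have hna : (0:ℝ) < ‖vec a‖ := norm_pos_iff.mpr hva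
  have hinner : ∀ m : Fin 2 → ℤ, (inner ℝ (vec m) α : ℝ) = m 0 * α 0 + m 1 * α 1 := by
    intro m
    rw [PiLp.inner_apply]
    simp [vec, Fin.sum_univ_two, RCLike.inner_apply, mul_comm]
  have hb' : (b 0 : ℝ) * α 0 + b 1 * α 1 = nb := by rw [← hinner]; exact hnb
  have hc' : (c 0 : ℝ) * α 0 + c 1 * α 1 = nc := by rw [← hinner]; exact hnc
  set D : ℝ := (det2 b c : ℝ) with hD
  have hDne : D ≠ 0 := by rw [hD]; exact_mod_cast hbc
  have hα0 : D * α 0 = (c 1 : ℝ) * nb - (b 1 : ℝ) * nc := by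
    simp only [hD, det2]; push_cast
    linear_combination (c 1 : ℝ) * hb' - (b 1 : ℝ) * hc'
  have hα1 : D * α 1 = (b 0 : ℝ) * nc - (c 0 : ℝ) * nb := by
    simp only [hD, det2]; push_cast
    linear_combination (b 0 : ℝ) * hc' - (c 0 : ℝ) * hb'
  set m : ℤ := a 0 * (c 1 * nb - b 1 * nc) + a 1 * (b 0 * nc - c 0 * nb) with hm
  have hinnera : (inner ℝ (vec a) α : ℝ) = m / D := by
    rw [hinner, eq_div_iff hDne, hm]
    push_cast
    linear_combination (a 0 : ℝ) * hα0 + (a 1 : ℝ) * hα1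
  refine ⟨|m - lam * det2 b c|, ?_⟩
  rw [infDist_hyperplane (vec a) hva α lam, hinnera]
  rw [Int.cast_abs]
  push_cast
  rw [← hD]
  rw [show ((m:ℝ)/D - lam) = ((m:ℝ) - lam*D)/D by field_simp, abs_div]
  rw [div_div, mul_comm |D| ‖vec a‖, div_eq_mul_inv]
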